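/- arXiv:2302.02995 — 3 statements merged into one kernel-verified Lean document; each statement's English description precedes it below -/
import Mathlib

section
/- Let (P, {B_t}_{t∈V(P)}) be a path decomposition of a finite simple graph G, let s, t be nodes of P, and let s', t' be nodes on the path from s to t in P with s' lying on the path from s to t'. Then every k-linkage between B_s and B_t contains, as a subgraph, a k-linkage between B_{s'} and B_{t'}. -/
/-- A path decomposition of `G`: bags indexed by the nodes `0, …, n-1` of a path,
covering all vertices and edges, such that the set of bags containing any fixed
vertex forms a non-empty interval. -/
structure PathDecomp {V : Type*} (G : SimpleGraph V) where
  n : ℕ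
  bag : Fin n → Set V
  mem_bag : ∀ v : V, ∃ t, v ∈ bag t
  edge_bag : ∀ u v : V, G.Adj u v → ∃ t, u ∈ bag t ∧ v ∈ bag t
  convex : ∀ (v : V) (s u t : Fin n), s ≤ u → u ≤ t → v ∈ bag s → v ∈ bag t → v ∈ bag u

/-- A `k`-linkage between `A` and `B` in `G`: `k` pairwise vertex-disjoint paths,
each starting in `A` and ending in `B`. -/
structure Linkage {V : Type*} (G : SimpleGraph V) (k : ℕ) (A B : Set V) where
  first : Fin k → V
  last : Fin k → V
  walk : ∀ i, G.Walk (first i) (last i)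
  isPath : ∀ i, (walk i).IsPath
  first_mem : ∀ i, first i ∈ A
  last_mem : ∀ i, last i ∈ B
  disjoint : ∀ i j, i ≠ j → ∀ x, x ∈ (walk i).support → x ∉ (walk j).support

/-- The subgraph of `G` formed by a linkage. -/
noncomputable def Linkage.toSubgraph {V : Type*} {G : SimpleGraph V} {k : ℕ} {A B : Set V}
    (L : Linkage G k A B) : G.Subgraph :=
  ⨆ i, (L.walk i).toSubgraph


open SimpleGraph

private lemma sep_lemma {V : Type*} {G : SimpleGraph V} (D : PathDecomp G) (m tb : Fin D.n)
    (hmt : m ≤ tb) :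
    ∀ {u v : V} (W : G.Walk u v) (sb : Fin D.n), sb ≤ m → u ∈ D.bag sb → v ∈ D.bag tb →
      ∃ x ∈ W.support, x ∈ D.bag m := by
  intro u v W
  induction W with
  | nil =>
    intro sb h1 h2 h3
    exact ⟨_, by simp, D.convex _ sb m tb h1 hmt h2 h3⟩
  | cons h p ih =>
    intro sb h1 h2 h3
    obtain ⟨r, hur, hwr⟩ := D.edge_bag _ _ h
    rcases le_or_gt m r with hr | hr
    · exact ⟨_, by simp, D.convex _ sb m r h1 hr h2 hur⟩
    · obtain ⟨x, hx1, hx2⟩ := ih r hr.le hwr h3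
      exact ⟨x, by simp [hx1], hx2⟩

private lemma extract_lemma {V : Type*} {G : SimpleGraph V} (D : PathDecomp G)
    (a b c d : Fin D.n) (hab : a ≤ b) (hbc : b ≤ c) (hcd : c ≤ d) {u v : V}
    (W : G.Walk u v) (hW : W.IsPath) (hu : u ∈ D.bag a) (hv : v ∈ D.bag d) :
    ∃ (x w : V) (W' : G.Walk x w), W'.IsPath ∧ x ∈ D.bag b ∧ w ∈ D.bag c ∧
      W'.toSubgraph ≤ W.toSubgraph ∧ W'.support ⊆ W.support := by
  classical
  obtain ⟨w, hwsup, hwc⟩ := sep_lemma D c d hcd W a (hab.trans hbc) hu hv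
  obtain ⟨x, hxsup, hxb⟩ := sep_lemma D b c hbc (W.takeUntil w hwsup) a hab hu hwc
  have hle1 : (W.takeUntil w hwsup).toSubgraph ≤ W.toSubgraph := by
    conv_rhs => rw [← W.take_spec hwsup]
    rw [Walk.toSubgraph_append]
    exact le_sup_left
  have hle2 : ((W.takeUntil w hwsup).dropUntil x hxsup).toSubgraph ≤
      (W.takeUntil w hwsup).toSubgraph := by
    conv_rhs => rw [← (W.takeUntil w hwsup).take_spec hxsup]
    rw [Walk.toSubgraph_append]
    exact le_sup_right
  refine ⟨x, w, (W.takeUntil w hwsup).dropUntil x hxsup,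
    (hW.takeUntil hwsup).dropUntil hxsup, hxb, hwc, hle2.trans hle1, ?_⟩
  exact List.Subset.trans (Walk.support_dropUntil_subset_support _ hxsup) (Walk.support_takeUntil_subset_support _ hwsup)

/-- Let `s', t'` be nodes on the path from `s` to `t` in a path decomposition, with
`s'` on the path from `s` to `t'`. Then every `k`-linkage between the bags of `s`
and `t` contains, as a subgraph, a `k`-linkage between the bags of `s'` and `t'`. -/
theorem stmt_5 {V : Type*} [Fintype V] (G : SimpleGraph V) (D : PathDecomp G)
    (k : ℕ) (s t s' t' : Fin D.n)
    (hs'1 : min s t ≤ s') (hs'2 : s' ≤ max s t)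
    (ht'1 : min s t ≤ t') (ht'2 : t' ≤ max s t)
    (hmid1 : min s t' ≤ s') (hmid2 : s' ≤ max s t')
    (L : Linkage G k (D.bag s) (D.bag t)) :
    ∃ L' : Linkage G k (D.bag s') (D.bag t'), L'.toSubgraph ≤ L.toSubgraph := by
  classical
  have H : ∀ i, ∃ (x w : V) (W' : G.Walk x w), W'.IsPath ∧ x ∈ D.bag s' ∧ w ∈ D.bag t' ∧
      W'.toSubgraph ≤ (L.walk i).toSubgraph ∧ W'.support ⊆ (L.walk i).support := by
    intro i
    rcases le_total s t with hst | hst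
    · -- s ≤ t, so s ≤ s' ≤ t' ≤ t
      have hst' : s ≤ t' := le_trans (by simpa [min_eq_left hst] using ht'1) le_rfl
      have h1 : s ≤ s' := by simpa [min_eq_left hst'] using hmid1
      have h2 : s' ≤ t' := by simpa [max_eq_right hst'] using hmid2
      have h3 : t' ≤ t := by simpa [max_eq_right hst] using ht'2
      exact extract_lemma D s s' t' t h1 h2 h3 (L.walk i) (L.isPath i)
        (L.first_mem i) (L.last_mem i)
    · -- t ≤ s, so t ≤ t' ≤ s' ≤ s
      have ht's : t' ≤ s := by simpa [max_eq_left hst] using ht'2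
      have h1 : t ≤ t' := by simpa [min_eq_right hst] using ht'1
      have h2 : t' ≤ s' := by simpa [min_eq_right ht's] using hmid1
      have h3 : s' ≤ s := by simpa [max_eq_left hst] using hs'2
      obtain ⟨x, w, W', hp, hx, hw, hsub, hsup⟩ :=
        extract_lemma D t t' s' s h1 h2 h3 (L.walk i).reverse ((L.isPath i).reverse)
          (L.last_mem i) (L.first_mem i)
      refine ⟨w, x, W'.reverse, hp.reverse, hw, hx, ?_, ?_⟩
      · rw [Walk.toSubgraph_reverse]
        rw [Walk.toSubgraph_reverse] at hsub
        exact hsub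
      · intro y hy
        rw [Walk.support_reverse] at hy
        have := hsup (by simpa using hy)
        simpa [Walk.support_reverse] using this
  choose x w W' hp hx hw hsub hsup using H
  refine ⟨⟨x, w, W', hp, hx, hw, fun i j hij y hyi hyj =>
    L.disjoint i j hij y (hsup i hyi) (hsup j hyj)⟩, ?_⟩
  exact iSup_mono hsub
end

section
/- For every positive integer a, every finite simple graph of pathwidth strictly less than a contains no complete binary tree of height 2a as a minor. -/
/-- The width of a path decomposition: maximum bag size minus 1. -/
noncomputable def PathDecomp.width {V : Type*} {G : SimpleGraph V} (D : PathDecomp G) : ℕ :=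
  (⨆ t, (D.bag t).ncard) - 1

/-- Pathwidth: the minimum width of a path decomposition. -/
noncomputable def pathwidth {V : Type*} (G : SimpleGraph V) : ℕ :=
  sInf { w | ∃ D : PathDecomp G, D.width = w }

/-- `H` is a minor of `G`: there is a family of pairwise disjoint connected
branch sets in `G`, one for each vertex of `H`, with edges of `H` realized by
edges of `G` between the corresponding branch sets. -/
def IsMinor {W V : Type*} (H : SimpleGraph W) (G : SimpleGraph V) : Prop :=
  ∃ f : W → Set V,
    (∀ w, (SimpleGraph.induce (f w) G).Connected) ∧
    (Pairwise fun w w' => Disjoint (f w) (f w')) ∧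
    (∀ w w', H.Adj w w' → ∃ u ∈ f w, ∃ v ∈ f w', G.Adj u v)

/-- The complete binary tree of height `h`: vertices are binary strings of
length `< h`, each vertex `l` of length `< h - 1` has two children `l ++ [b]`. -/
def completeBinaryTree (h : ℕ) : SimpleGraph {l : List Bool // l.length < h} :=
  SimpleGraph.fromRel (fun u v => ∃ b : Bool, (v : List Bool) = (u : List Bool) ++ [b])

/- ### Auxiliary development -/

section Aux

variable {V : Type*} {G : SimpleGraph V}

/-- Along a walk in an induced subgraph, if the endpoints are in bags `s` and `t`
with `s ≤ u ≤ t`, then some vertex of the subgraph lies in bag `u`. -/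
lemma walk_bag (D : PathDecomp G) (S : Set V) {x y : ↥S}
    (w : (SimpleGraph.induce S G).Walk x y) :
    ∀ (s u t : Fin D.n), s ≤ u → u ≤ t → (x : V) ∈ D.bag s → (y : V) ∈ D.bag t →
      ∃ z ∈ S, z ∈ D.bag u := by
  induction w with
  | nil =>
      intro s u t hsu hut hx hy
      exact ⟨_, (by exact Subtype.mem _), D.convex _ s u t hsu hut hx hy⟩
  | @cons x' c y' h w ih =>
      intro s u t hsu hut hx hy
      have hadj : G.Adj (x' : V) (c : V) := h
      obtain ⟨r, hr1, hr2⟩ := D.edge_bag _ _ hadj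
      rcases le_total u r with hur | hru
      · exact ⟨_, Subtype.mem _, D.convex _ s u r hsu hur hx hr1⟩
      · exact ih r u t hru hut hr2 hy

/-- Key convexity lemma: the set of bags met by a connected set is an interval. -/
lemma connected_meets (D : PathDecomp G) {S : Set V}
    (hS : (SimpleGraph.induce S G).Connected) {s u t : Fin D.n}
    (hsu : s ≤ u) (hut : u ≤ t)
    (hs : (S ∩ D.bag s).Nonempty) (ht : (S ∩ D.bag t).Nonempty) :
    (S ∩ D.bag u).Nonempty := by
  obtain ⟨x, hxS, hxb⟩ := hs
  obtain ⟨y, hyS, hyb⟩ := ht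
  obtain ⟨w⟩ := hS.preconnected ⟨x, hxS⟩ ⟨y, hyS⟩
  obtain ⟨z, hz, hzb⟩ := walk_bag D S w s u t hsu hut hxb hyb
  exact ⟨z, hz, hzb⟩

/-- Transfer of a path decomposition along a minor model. -/
noncomputable def liftDecomp {W : Type*} {H : SimpleGraph W} (f : W → Set V)
    (hconn : ∀ w, (SimpleGraph.induce (f w) G).Connected)
    (hedge : ∀ w w', H.Adj w w' → ∃ u ∈ f w, ∃ v ∈ f w', G.Adj u v)
    (D : PathDecomp G) : PathDecomp H where
  n := D.n
  bag t := {w | (f w ∩ D.bag t).Nonempty}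
  mem_bag := by
    intro w
    obtain ⟨x⟩ := (hconn w).nonempty
    obtain ⟨t, ht⟩ := D.mem_bag (x : V)
    exact ⟨t, ⟨x, x.2, ht⟩⟩
  edge_bag := by
    intro w w' hadj
    obtain ⟨u, hu, v, hv, huv⟩ := hedge w w' hadj
    obtain ⟨t, ht1, ht2⟩ := D.edge_bag u v huv
    exact ⟨t, ⟨u, hu, ht1⟩, ⟨v, hv, ht2⟩⟩
  convex := by
    intro w s u t hsu hut hws hwt
    exact connected_meets D (hconn w) hsu hut hws hwt

lemma liftDecomp_bag_ncard {W : Type*} {H : SimpleGraph W} (f : W → Set V)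
    (hconn : ∀ w, (SimpleGraph.induce (f w) G).Connected)
    (hdisj : Pairwise fun w w' => Disjoint (f w) (f w'))
    (hedge : ∀ w w', H.Adj w w' → ∃ u ∈ f w, ∃ v ∈ f w', G.Adj u v)
    (D : PathDecomp G) (hfin : ∀ t, (D.bag t).Finite) (t : Fin D.n) :
    ((liftDecomp f hconn hedge D).bag t).ncard ≤ (D.bag t).ncard := by
  by_cases hne : {w | (f w ∩ D.bag t).Nonempty}.Nonempty
  · obtain ⟨w0, hw0⟩ := hne
    classical
    refine Set.ncard_le_ncard_of_injOn
      (fun w => if h : (f w ∩ D.bag t).Nonempty then h.choose else hw0.choose)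
      ?_ ?_ (hfin t)
    · intro w hw
      have hw' : (f w ∩ D.bag t).Nonempty := hw
      simp only [dif_pos hw']
      exact hw'.choose_spec.2
    · intro w hw w' hw' hgw
      have h1 : (f w ∩ D.bag t).Nonempty := hw
      have h2 : (f w' ∩ D.bag t).Nonempty := hw'
      simp only [dif_pos h1, dif_pos h2] at hgw
      by_contra hne'
      exact (hdisj hne').le_bot ⟨h1.choose_spec.1, hgw ▸ h2.choose_spec.1⟩
  · rw [Set.not_nonempty_iff_eq_empty] at hne
    show ({w | (f w ∩ D.bag t).Nonempty}).ncard ≤ _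
    simp [hne]

end Aux

instance finiteTreeVerts (h : ℕ) : Finite {l : List Bool // l.length < h} :=
  (List.finite_length_lt Bool h).to_subtype

lemma tree_adj {h : ℕ} (x y : {l : List Bool // l.length < h})
    (b : Bool) (hxy : (y : List Bool) = (x : List Bool) ++ [b]) :
    (completeBinaryTree h).Adj x y := by
  refine ⟨?_, Or.inl ⟨b, hxy⟩⟩
  intro hEq
  have := congrArg (List.length ∘ Subtype.val) hEq
  simp [hxy] at this

/-- The subtree under `p` (minus the subtree under `q`) is connected. -/
lemma subtree_connected {h : ℕ} (p : List Bool) (hph : p.length < h)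
    (S : Set {l : List Bool // l.length < h})
    (hpS : (⟨p, hph⟩ : {l : List Bool // l.length < h}) ∈ S)
    (hpref : ∀ x ∈ S, p <+: (x : {l : List Bool // l.length < h}).1)
    (hparent : ∀ x, x ∈ S → (x : {l : List Bool // l.length < h}).1 ≠ p →
      ∀ hd : (x : {l : List Bool // l.length < h}).1.dropLast.length < h,
        (⟨(x : {l : List Bool // l.length < h}).1.dropLast, hd⟩ :
          {l : List Bool // l.length < h}) ∈ S) :
    (SimpleGraph.induce S (completeBinaryTree h)).Connected := by
  rw [SimpleGraph.connected_iff]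
  refine ⟨fun x y => ?_, ⟨⟨⟨p, hph⟩, hpS⟩⟩⟩
  suffices key : ∀ n : ℕ, ∀ x : ↥S, ((x : {l : List Bool // l.length < h}) : List Bool).length = n →
      (SimpleGraph.induce S (completeBinaryTree h)).Reachable x ⟨⟨p, hph⟩, hpS⟩ by
    exact (key _ x rfl).trans (key _ y rfl).symm
  intro n
  induction n using Nat.strong_induction_on with
  | _ n ih =>
    rintro ⟨⟨l, hlh⟩, hxS⟩ hlen
    simp only at hlen
    by_cases hxp : l = p
    · subst hxp
      exact SimpleGraph.Reachable.refl _
    · have hpl : p <+: l := hpref _ hxS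
      have hlnil : l ≠ [] := by
        intro hnil
        rw [hnil] at hpl
        exact hxp (by rw [hnil]; exact (List.prefix_nil.mp hpl).symm)
      have hdlen : l.dropLast.length < h := by
        simp only [List.length_dropLast]; omega
      have hparS := hparent ⟨l, hlh⟩ hxS hxp hdlen
      have hadj : (completeBinaryTree h).Adj
          (⟨l.dropLast, hdlen⟩ : {l : List Bool // l.length < h}) ⟨l, hlh⟩ := by
        apply tree_adj _ _ (l.getLast hlnil)
        exact (List.dropLast_append_getLast hlnil).symm
      have hadj' : (SimpleGraph.induce S (completeBinaryTree h)).Adj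
          ⟨⟨l.dropLast, hdlen⟩, hparS⟩ ⟨⟨l, hlh⟩, hxS⟩ := by
        simp only [SimpleGraph.comap_adj, Function.Embedding.coe_subtype]
        exact hadj
      have hlt : l.dropLast.length < n := by
        have : l.length ≠ 0 := by simpa using hlnil
        simp only [List.length_dropLast]; omega
      exact hadj'.symm.reachable.trans (ih _ hlt ⟨⟨l.dropLast, hdlen⟩, hparS⟩ rfl)

lemma prefix_dropLast {p l : List Bool} (hpl : p <+: l) (hne : p ≠ l) :
    p <+: l.dropLast := by
  rw [List.dropLast_eq_take, List.prefix_take_iff]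
  refine ⟨hpl, ?_⟩
  have h1 : p.length ≤ l.length := hpl.length_le
  have h2 : p.length ≠ l.length := fun h => hne (hpl.eq_of_length h)
  omega

lemma prefix_eq_prefix {q q' l : List Bool} (h : q <+: l) (h' : q' <+: l)
    (hlen : q.length = q'.length) : q = q' := by
  rw [List.prefix_iff_eq_take.mp h, List.prefix_iff_eq_take.mp h', hlen]

/-- Main induction: in any path decomposition of the complete binary tree of height `h`,
for each node `p` with `p.length + 2a ≤ h`, some bag meets the subtree below `p`
in at least `a + 1` vertices. -/
lemma key_lemma {h : ℕ} (D : PathDecomp (completeBinaryTree h)) :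
    ∀ a : ℕ, 1 ≤ a → ∀ p : List Bool, p.length + 2 * a ≤ h →
      ∃ t, a + 1 ≤ (D.bag t ∩ {x | p <+: x.1}).ncard := by
  intro a
  induction a with
  | zero => intro h1; exact absurd h1 (by omega)
  | succ a ih =>
    intro _ p hp
    by_cases ha0 : a = 0
    · subst ha0
      have h0 : p.length < h := by omega
      have h1 : (p ++ [false]).length < h := by simp; omega
      have hadj : (completeBinaryTree h).Adj ⟨p, h0⟩ ⟨p ++ [false], h1⟩ :=
        tree_adj _ _ false rfl
      obtain ⟨t, ht0, ht1⟩ := D.edge_bag _ _ hadj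
      refine ⟨t, ?_⟩
      have hsub : ({⟨p, h0⟩, ⟨p ++ [false], h1⟩} : Set {l : List Bool // l.length < h}) ⊆
          D.bag t ∩ {x | p <+: x.1} := by
        rintro x (rfl | rfl)
        · exact ⟨ht0, List.prefix_rfl⟩
        · exact ⟨ht1, List.prefix_append p _⟩
      have hne : (⟨p, h0⟩ : {l : List Bool // l.length < h}) ≠ ⟨p ++ [false], h1⟩ := by
        intro hEq
        have := congrArg (fun x : {l : List Bool // l.length < h} => x.1.length) hEq
        simp at this
      calc (0:ℕ) + 1 + 1 = ({⟨p, h0⟩, ⟨p ++ [false], h1⟩} :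
              Set {l : List Bool // l.length < h}).ncard := (Set.ncard_pair hne).symm
        _ ≤ _ := Set.ncard_le_ncard hsub (Set.toFinite _)
    · have ha1 : 1 ≤ a := by omega
      obtain ⟨t1, ht1⟩ := ih ha1 (p ++ [false, false]) (by simp; omega)
      obtain ⟨t2, ht2⟩ := ih ha1 (p ++ [false, true]) (by simp; omega)
      obtain ⟨t3, ht3⟩ := ih ha1 (p ++ [true, false]) (by simp; omega)
      by_contra hcon
      push_neg at hcon
      have hcont : ∀ (q : List Bool) (t : Fin D.n), p <+: q →
          a + 1 ≤ (D.bag t ∩ {x | q <+: x.1}).ncard →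
          (D.bag t ∩ {x | p <+: x.1} ⊆ {x | q <+: x.1}) := by
        intro q t hpq hcard
        have hsub : D.bag t ∩ {x | q <+: x.1} ⊆ D.bag t ∩ {x | p <+: x.1} :=
          fun x hx => ⟨hx.1, hpq.trans hx.2⟩
        have hle : (D.bag t ∩ {x | p <+: x.1}).ncard ≤
            (D.bag t ∩ {x | q <+: x.1}).ncard := by
          have := hcon t; omega
        have heq := Set.eq_of_subset_of_ncard_le hsub hle (Set.toFinite _)
        intro x hx
        rw [← heq] at hx
        exact hx.2
      have main : ∀ (qi qj qm : List Bool) (ti tj tm : Fin D.n),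
          qi.length = p.length + 2 → qj.length = p.length + 2 → qm.length = p.length + 2 →
          p <+: qi → p <+: qj → p <+: qm → qm ≠ qi → qm ≠ qj →
          ti ≤ tm → tm ≤ tj →
          (D.bag ti ∩ {x | qi <+: x.1}).Nonempty →
          (D.bag tj ∩ {x | qj <+: x.1}).Nonempty →
          (D.bag tm ∩ {x | p <+: x.1} ⊆ {x | qm <+: x.1}) → False := by
        intro qi qj qm ti tj tm hli hlj hlm hpi hpj hpm hmi hmj hor1 hor2 hnei hnej hcm
        have hph : p.length < h := by omega
        have hpS : (⟨p, hph⟩ : {l : List Bool // l.length < h}) ∈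
            {x : {l : List Bool // l.length < h} | p <+: x.1 ∧ ¬ qm <+: x.1} := by
          refine ⟨List.prefix_rfl, fun hq => ?_⟩
          have hle : qm.length ≤ p.length := hq.length_le
          omega
        have hconnS : (SimpleGraph.induce
            {x : {l : List Bool // l.length < h} | p <+: x.1 ∧ ¬ qm <+: x.1}
            (completeBinaryTree h)).Connected := by
          apply subtree_connected p hph _ hpS
          · intro x hx; exact hx.1
          · intro x hx hxp hd
            exact ⟨prefix_dropLast hx.1 (fun hEq => hxp hEq.symm),
              fun hq => hx.2 (hq.trans (List.dropLast_prefix _))⟩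
        obtain ⟨x, hxb, hxq⟩ := hnei
        obtain ⟨y, hyb, hyq⟩ := hnej
        have hxS : x ∈ {x : {l : List Bool // l.length < h} | p <+: x.1 ∧ ¬ qm <+: x.1} :=
          ⟨hpi.trans hxq, fun hq => hmi (prefix_eq_prefix hq hxq (by omega))⟩
        have hyS : y ∈ {x : {l : List Bool // l.length < h} | p <+: x.1 ∧ ¬ qm <+: x.1} :=
          ⟨hpj.trans hyq, fun hq => hmj (prefix_eq_prefix hq hyq (by omega))⟩
        obtain ⟨z, hzS, hzb⟩ := connected_meets D hconnS hor1 hor2 ⟨x, hxS, hxb⟩ ⟨y, hyS, hyb⟩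
        exact hzS.2 (hcm ⟨hzb, hzS.1⟩)
      have hne1 : (D.bag t1 ∩ {x | p ++ [false, false] <+: x.1}).Nonempty :=
        Set.nonempty_of_ncard_ne_zero (by omega)
      have hne2 : (D.bag t2 ∩ {x | p ++ [false, true] <+: x.1}).Nonempty :=
        Set.nonempty_of_ncard_ne_zero (by omega)
      have hne3 : (D.bag t3 ∩ {x | p ++ [true, false] <+: x.1}).Nonempty :=
        Set.nonempty_of_ncard_ne_zero (by omega)
      have hc1 := hcont _ t1 (List.prefix_append p _) ht1
      have hc2 := hcont _ t2 (List.prefix_append p _) ht2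
      have hc3 := hcont _ t3 (List.prefix_append p _) ht3
      have len1 : (p ++ [false, false]).length = p.length + 2 := by simp
      have len2 : (p ++ [false, true]).length = p.length + 2 := by simp
      have len3 : (p ++ [true, false]).length = p.length + 2 := by simp
      have pre1 : p <+: p ++ [false, false] := List.prefix_append p _
      have pre2 : p <+: p ++ [false, true] := List.prefix_append p _
      have pre3 : p <+: p ++ [true, false] := List.prefix_append p _
      have d12 : p ++ [false, false] ≠ p ++ [false, true] := by simp
      have d13 : p ++ [false, false] ≠ p ++ [true, false] := by simp
      have d23 : p ++ [false, true] ≠ p ++ [true, false] := by simp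
      rcases le_total t1 t2 with h12 | h12 <;> rcases le_total t2 t3 with h23 | h23 <;>
        rcases le_total t1 t3 with h13 | h13
      · exact main _ _ _ t1 t3 t2 len1 len3 len2 pre1 pre3 pre2 d12.symm d23 h12 h23 hne1 hne3 hc2
      · exact main _ _ _ t1 t3 t2 len1 len3 len2 pre1 pre3 pre2 d12.symm d23 h12 h23 hne1 hne3 hc2
      · exact main _ _ _ t1 t2 t3 len1 len2 len3 pre1 pre2 pre3 d13.symm d23.symm h13 h23 hne1 hne2 hc3
      · exact main _ _ _ t3 t2 t1 len3 len2 len1 pre3 pre2 pre1 d13 d12 h13 h12 hne3 hne2 hc1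
      · exact main _ _ _ t2 t3 t1 len2 len3 len1 pre2 pre3 pre1 d12 d13 h12 h13 hne2 hne3 hc1
      · exact main _ _ _ t2 t1 t3 len2 len1 len3 pre2 pre1 pre3 d23.symm d13.symm h23 h13 hne2 hne1 hc3
      · exact main _ _ _ t3 t1 t2 len3 len1 len2 pre3 pre1 pre2 d23 d12.symm h23 h12 hne3 hne1 hc2
      · exact main _ _ _ t3 t1 t2 len3 len1 len2 pre3 pre1 pre2 d23 d12.symm h23 h12 hne3 hne1 hc2

/-- For every positive integer `a`, every finite simple graph of pathwidth strictly
less than `a` contains no complete binary tree of height `2a` as a minor. -/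
theorem stmt_8 {V : Type*} [Fintype V] (G : SimpleGraph V) (a : ℕ) (ha : 0 < a)
    (hpw : pathwidth G < a) :
    ¬ IsMinor (completeBinaryTree (2 * a)) G := by
  rintro ⟨f, hconn, hdisj, hedge⟩
  -- a path decomposition realizing the pathwidth
  have hne : {w | ∃ D : PathDecomp G, D.width = w}.Nonempty :=
    ⟨_, ⟨⟨1, fun _ => Set.univ, fun v => ⟨0, trivial⟩, fun u v _ => ⟨0, trivial, trivial⟩,
      fun v s u t _ _ _ _ => trivial⟩, rfl⟩⟩
  have hmem : pathwidth G ∈ {w | ∃ D : PathDecomp G, D.width = w} := Nat.sInf_mem hne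
  obtain ⟨D, hD⟩ := hmem
  have hbag : ∀ t, (D.bag t).ncard ≤ a := by
    intro t
    have hb : BddAbove (Set.range fun t => (D.bag t).ncard) :=
      Set.Finite.bddAbove (Set.finite_range _)
    have h1 : (D.bag t).ncard ≤ ⨆ t, (D.bag t).ncard := le_ciSup hb t
    have h2 : D.width < a := by rw [hD]; exact hpw
    unfold PathDecomp.width at h2
    omega
  have hbag' : ∀ t, ((liftDecomp f hconn hedge D).bag t).ncard ≤ a := fun t =>
    le_trans (liftDecomp_bag_ncard f hconn hdisj hedge D (fun t => Set.toFinite _) t) (hbag t)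
  obtain ⟨t, ht⟩ := key_lemma (liftDecomp f hconn hedge D) a ha []
    (by simp)
  have huniv : (liftDecomp f hconn hedge D).bag t ∩ {x | [] <+: x.1} =
      (liftDecomp f hconn hedge D).bag t := by
    ext x; simp
  rw [huniv] at ht
  have := hbag' t
  omega
end

section
/- Let b and c be integers with b > c ≥ 1 and let a = 2^c. Let G be the graph obtained from a path on 2^{b−c} vertices by replacing each vertex with a clique on a/2 = 2^{c−1} vertices and replacing each edge by a complete bipartite graph between the two corresponding cliques (i.e., the lexicographic product of the path on 2^{b−c} vertices with the complete graph on 2^{c−1} vertices). Then the treedepth of G is at least (a/2)(b − c) = 2^{c−1}(b − c). -/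
/-- A forest order: a partial order in which the set of ancestors (predecessors)
of every element is a chain. Forest orders correspond to rooted forests, where
`le u v` means `u` is an ancestor of `v` (or `u = v`). -/
def IsForestOrder {V : Type*} (le : V → V → Prop) : Prop :=
  (∀ v, le v v) ∧ (∀ u v, le u v → le v u → u = v) ∧
  (∀ u v w, le u v → le v w → le u w) ∧
  (∀ u w v, le u v → le w v → le u w ∨ le w u)

/-- An elimination forest of `G`: a rooted forest on the vertices of `G` such that
for every edge, one endpoint is an ancestor of the other. -/
def IsElimForest {V : Type*} (G : SimpleGraph V) (le : V → V → Prop) : Prop :=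
  IsForestOrder le ∧ ∀ u v, G.Adj u v → le u v ∨ le v u

/-- The height of a rooted forest: the maximum number of vertices on a
root-to-leaf path, i.e. the maximum size of a set of ancestors of a vertex. -/
noncomputable def forestHeight {V : Type*} (le : V → V → Prop) : ℕ :=
  ⨆ v, {u | le u v}.ncard

/-- Treedepth: the minimum height of an elimination forest. -/
noncomputable def treedepth {V : Type*} (G : SimpleGraph V) : ℕ :=
  sInf { n | ∃ le : V → V → Prop, IsElimForest G le ∧ forestHeight le = n }

/-- The graph obtained from a path on `2^(b-c)` vertices by blowing up every
vertex into a clique on `2^(c-1)` vertices (the lexicographic product of the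
path on `2^(b-c)` vertices with the complete graph on `2^(c-1)` vertices). -/
def pathCliqueGraph (b c : ℕ) : SimpleGraph (Fin (2 ^ (b - c)) × Fin (2 ^ (c - 1))) :=
  SimpleGraph.fromRel (fun x y => x.1 = y.1 ∨ (x.1 : ℕ) + 1 = (y.1 : ℕ))

/-! ### Auxiliary development -/

open scoped Classical

/-- The generic path-of-cliques graph on `N` columns of size `s`. -/
def pcg (N s : ℕ) : SimpleGraph (Fin N × Fin s) :=
  SimpleGraph.fromRel (fun x y => x.1 = y.1 ∨ (x.1 : ℕ) + 1 = (y.1 : ℕ))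

section Aux

variable {N s : ℕ}

lemma pcg_adj_col {x y : Fin N × Fin s} (hne : x ≠ y) (h : x.1 = y.1) :
    (pcg N s).Adj x y := by
  rw [pcg, SimpleGraph.fromRel_adj]
  exact ⟨hne, Or.inl (Or.inl h)⟩

lemma pcg_adj_succ {x y : Fin N × Fin s} (h : (x.1 : ℕ) + 1 = (y.1 : ℕ)) :
    (pcg N s).Adj x y := by
  rw [pcg, SimpleGraph.fromRel_adj]
  refine ⟨?_, Or.inl (Or.inr h)⟩
  intro he; rw [he] at h; omega

/-- In an elimination forest, any set of vertices occupying exactly the columns of an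
interval (all columns nonempty) has a minimum element. -/
lemma exists_bot (le : Fin N × Fin s → Fin N × Fin s → Prop)
    (hle : IsElimForest (pcg N s) le)
    (S : Finset (Fin N × Fin s)) (a n : ℕ) (hn : 0 < n)
    (hS : ∀ v ∈ S, a ≤ (v.1 : ℕ) ∧ (v.1 : ℕ) < a + n)
    (hcol : ∀ k, a ≤ k → k < a + n → ∃ v ∈ S, (v.1 : ℕ) = k) :
    ∃ m ∈ S, ∀ v ∈ S, le m v := by
  obtain ⟨hrefl, hanti, htrans, hfork⟩ := hle.1
  have hedge := hle.2
  have hSne : S.Nonempty := by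
    obtain ⟨v, hv, -⟩ := hcol a (le_refl a) (by omega); exact ⟨v, hv⟩
  obtain ⟨m, hm, hmin'⟩ :=
    Finset.exists_min_image S (fun v => (S.filter (fun u => le u v)).card) hSne
  have hmin : ∀ u ∈ S, le u m → u = m := by
    intro u hu hum
    by_contra hne
    have hss : S.filter (fun w => le w u) ⊂ S.filter (fun w => le w m) := by
      constructor
      · intro w hw
        simp only [Finset.mem_filter] at hw ⊢
        exact ⟨hw.1, htrans _ _ _ hw.2 hum⟩
      · intro hsub
        have hmem : m ∈ S.filter (fun w => le w u) :=
          hsub (by simp only [Finset.mem_filter]; exact ⟨hm, hrefl m⟩)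
        simp only [Finset.mem_filter] at hmem
        exact hne (hanti _ _ hum hmem.2)
    have h1 := Finset.card_lt_card hss
    have h2 := hmin' u hu
    omega
  have hstep : ∀ u v, v ∈ S → le m u → (pcg N s).Adj u v → le m v := by
    intro u v hv hmu hadj
    rcases hedge u v hadj with h | h
    · exact htrans _ _ _ hmu h
    · rcases hfork m v u hmu h with h' | h'
      · exact h'
      · rw [hmin v hv h']; exact hrefl m
  have hsame : ∀ v ∈ S, (v.1 : ℕ) = (m.1 : ℕ) → le m v := by
    intro v hv h
    by_cases hvm : v = m
    · rw [hvm]; exact hrefl m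
    · exact hstep m v hv (hrefl m)
        (pcg_adj_col (fun he => hvm he.symm) (Fin.ext h.symm))
  have hright : ∀ d, ∀ v ∈ S, (v.1 : ℕ) = (m.1 : ℕ) + d → le m v := by
    intro d
    induction d with
    | zero => intro v hv h; exact hsame v hv (by omega)
    | succ d ih =>
      intro v hv h
      have hb1 : a ≤ (m.1 : ℕ) + d := le_trans (hS m hm).1 (by omega)
      have hb2 : (m.1 : ℕ) + d < a + n := by have := (hS v hv).2; omega
      obtain ⟨u, hu, hud⟩ := hcol ((m.1 : ℕ) + d) hb1 hb2
      exact hstep u v hv (ih u hu hud) (pcg_adj_succ (by omega))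
  have hleft : ∀ d, ∀ v ∈ S, (v.1 : ℕ) + d = (m.1 : ℕ) → le m v := by
    intro d
    induction d with
    | zero => intro v hv h; exact hsame v hv (by omega)
    | succ d ih =>
      intro v hv h
      have hb1 : a ≤ (v.1 : ℕ) + 1 := le_trans (hS v hv).1 (by omega)
      have hb2 : (v.1 : ℕ) + 1 < a + n := by have := (hS m hm).2; omega
      obtain ⟨u, hu, hud⟩ := hcol ((v.1 : ℕ) + 1) hb1 hb2
      have hmu : le m u := ih u hu (by omega)
      have hadj : (pcg N s).Adj v u := pcg_adj_succ (by omega)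
      exact hstep u v hv hmu hadj.symm
  refine ⟨m, hm, fun v hv => ?_⟩
  rcases le_or_gt (m.1 : ℕ) (v.1 : ℕ) with h | h
  · exact hright ((v.1 : ℕ) - (m.1 : ℕ)) v hv (by omega)
  · exact hleft ((m.1 : ℕ) - (v.1 : ℕ)) v hv (by omega)

/-- A set of vertices supported on an interval of `n` columns has at most `n * s` elements. -/
lemma card_interval_le (S : Finset (Fin N × Fin s)) (a n : ℕ)
    (hS : ∀ v ∈ S, a ≤ (v.1 : ℕ) ∧ (v.1 : ℕ) < a + n) :
    S.card ≤ n * s := by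
  have h := Finset.card_le_card_of_injOn (fun v : Fin N × Fin s => ((v.1 : ℕ) - a, v.2))
    (t := Finset.range n ×ˢ Finset.univ)
    (fun v hv => by
      simp only [Finset.mem_coe, Finset.mem_product, Finset.mem_range, Finset.mem_univ, and_true]
      have := hS v hv; omega)
    (fun u hu v hv huv => by
      have hu' := hS u (by simpa using hu)
      have hv' := hS v (by simpa using hv)
      have huv' : ((u.1 : ℕ) - a, u.2) = ((v.1 : ℕ) - a, v.2) := huv
      injection huv' with h1 h2
      have h3 : (u.1 : ℕ) = (v.1 : ℕ) := by omega
      exact Prod.ext (Fin.ext h3) h2)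
  simpa using h

/-- Key lemma: any set of vertices covering all columns of an interval of length `n`
witnesses height at least `s * (log₂ n + 1)` minus its deficiency. -/
lemma key (le : Fin N × Fin s → Fin N × Fin s → Prop)
    (hle : IsElimForest (pcg N s) le) :
    ∀ S : Finset (Fin N × Fin s), ∀ a n : ℕ, 0 < n →
    (∀ v ∈ S, a ≤ (v.1 : ℕ) ∧ (v.1 : ℕ) < a + n) →
    (∀ k, a ≤ k → k < a + n → ∃ v ∈ S, (v.1 : ℕ) = k) →
    ∃ v ∈ S, s * (Nat.log 2 n + 1) ≤ (S.filter (fun u => le u v)).card + (n * s - S.card) := by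
  intro S
  induction S using Finset.strongInduction with
  | _ S IH =>
  intro a n hn hS hcol
  rcases Nat.eq_zero_or_pos s with hs | hs
  · obtain ⟨v, hv, -⟩ := hcol a le_rfl (by omega)
    exact ⟨v, hv, by simp [hs]⟩
  obtain ⟨m, hm, hmle⟩ := exists_bot le hle S a n hn hS hcol
  by_cases hfull : ∀ k, a ≤ k → k < a + n → ∃ v ∈ S.erase m, (v.1 : ℕ) = k
  · obtain ⟨v, hv, hrec⟩ := IH (S.erase m) (Finset.erase_ssubset hm) a n hn
      (fun v hv => hS v (Finset.mem_of_mem_erase hv)) hfull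
    refine ⟨v, Finset.mem_of_mem_erase hv, ?_⟩
    have hins : insert m ((S.erase m).filter (fun u => le u v)) ⊆ S.filter (fun u => le u v) := by
      intro u hu
      rcases Finset.mem_insert.1 hu with rfl | hu
      · exact Finset.mem_filter.2 ⟨hm, hmle v (Finset.mem_of_mem_erase hv)⟩
      · have h' := Finset.mem_filter.1 hu
        exact Finset.mem_filter.2 ⟨Finset.mem_of_mem_erase h'.1, h'.2⟩
    have hnotmem : m ∉ (S.erase m).filter (fun u => le u v) := by
      intro h; exact (Finset.mem_erase.1 (Finset.mem_filter.1 h).1).1 rfl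
    have hcard1 : ((S.erase m).filter (fun u => le u v)).card + 1
        ≤ (S.filter (fun u => le u v)).card := by
      have h' := Finset.card_le_card hins
      rw [Finset.card_insert_of_notMem hnotmem] at h'
      omega
    have hcard2 : S.card ≤ n * s := card_interval_le S a n hS
    have hcard3 : (S.erase m).card = S.card - 1 := Finset.card_erase_of_mem hm
    have hcard4 : 0 < S.card := Finset.card_pos.2 ⟨m, hm⟩
    omega
  · push_neg at hfull
    obtain ⟨k0, hk0a, hk0n, hk0⟩ := hfull
    have hmk : (m.1 : ℕ) = k0 := by
      obtain ⟨v, hv, hvk⟩ := hcol k0 hk0a hk0n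
      by_cases hvm : v = m
      · rw [← hvm]; exact hvk
      · exact absurd hvk (hk0 v (Finset.mem_erase.2 ⟨hvm, hv⟩))
    have honly : ∀ v ∈ S, (v.1 : ℕ) = k0 → v = m := by
      intro v hv hvk
      by_contra hvm
      exact hk0 v (Finset.mem_erase.2 ⟨hvm, hv⟩) hvk
    by_cases hn1 : n = 1
    · subst hn1
      refine ⟨m, hm, ?_⟩
      have h1 : 1 ≤ (S.filter (fun u => le u m)).card :=
        Finset.card_pos.2 ⟨m, Finset.mem_filter.2 ⟨hm, hle.1.1 m⟩⟩
      have h2 : S.card ≤ 1 := by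
        refine Finset.card_le_one.2 (fun u hu v hv => ?_)
        have hu' := honly u hu (by have := hS u hu; omega)
        have hv' := honly v hv (by have := hS v hv; omega)
        rw [hu', hv']
      rw [Nat.log_one_right]
      simp only [zero_add, mul_one, one_mul]
      omega
    · have hn2 : 2 ≤ n := by omega
      set l := k0 - a with hl
      set r := a + n - 1 - k0 with hr
      have main : ∀ a' n' oa ro : ℕ, 0 < n' → n' + 1 + ro = n → n / 2 ≤ n' →
          (∀ k, a' ≤ k → k < a' + n' → a ≤ k ∧ k < a + n ∧ k ≠ k0) →
          (∀ j, a ≤ j → j < a + n → j ≠ k0 → ¬(a' ≤ j ∧ j < a' + n') → oa ≤ j ∧ j < oa + ro) →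
          ∃ v ∈ S, s * (Nat.log 2 n + 1)
            ≤ (S.filter (fun u => le u v)).card + (n * s - S.card) := by
        intro a' n' oa ro hn'pos hsplit hhalf hsub hother
        set S' := S.filter (fun v => a' ≤ (v.1 : ℕ) ∧ (v.1 : ℕ) < a' + n') with hS'def
        have hS'sub : S' ⊆ S := Finset.filter_subset _ _
        have hmS' : m ∉ S' := by
          intro h
          have h' := (Finset.mem_filter.1 h).2
          exact (hsub _ h'.1 h'.2).2.2 hmk
        have hS'ss : S' ⊂ S := ⟨hS'sub, fun h => hmS' (h hm)⟩
        have hS'bounds : ∀ v ∈ S', a' ≤ (v.1 : ℕ) ∧ (v.1 : ℕ) < a' + n' :=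
          fun v hv => (Finset.mem_filter.1 hv).2
        have hS'col : ∀ k, a' ≤ k → k < a' + n' → ∃ v ∈ S', (v.1 : ℕ) = k := by
          intro k h1 h2
          obtain ⟨hka, hkn, hkk0⟩ := hsub k h1 h2
          obtain ⟨v, hv, hvk⟩ := hcol k hka hkn
          exact ⟨v, Finset.mem_filter.2 ⟨hv, by omega⟩, hvk⟩
        obtain ⟨v, hv, hrec⟩ := IH S' hS'ss a' n' hn'pos hS'bounds hS'col
        refine ⟨v, hS'sub hv, ?_⟩
        have hins : insert m (S'.filter (fun u => le u v)) ⊆ S.filter (fun u => le u v) := by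
          intro u hu
          rcases Finset.mem_insert.1 hu with rfl | hu
          · exact Finset.mem_filter.2 ⟨hm, hmle v (hS'sub hv)⟩
          · have h' := Finset.mem_filter.1 hu
            exact Finset.mem_filter.2 ⟨hS'sub h'.1, h'.2⟩
        have hnm : m ∉ S'.filter (fun u => le u v) :=
          fun h => hmS' (Finset.filter_subset _ _ h)
        have hcard1 : (S'.filter (fun u => le u v)).card + 1
            ≤ (S.filter (fun u => le u v)).card := by
          have h' := Finset.card_le_card hins
          rw [Finset.card_insert_of_notMem hnm] at h'
          omega
        set So := S.filter
          (fun w => (w.1 : ℕ) ≠ k0 ∧ ¬(a' ≤ (w.1 : ℕ) ∧ (w.1 : ℕ) < a' + n')) with hSo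
        have hSocard : So.card ≤ ro * s := by
          apply card_interval_le So oa ro
          intro w hw
          have h' := (Finset.mem_filter.1 hw).2
          have hb := hS w (Finset.mem_filter.1 hw).1
          exact hother _ hb.1 hb.2 h'.1 h'.2
        have hScard : S.card ≤ S'.card + 1 + So.card := by
          have hsubU : S ⊆ S' ∪ So ∪ {m} := by
            intro w hw
            by_cases hwk : (w.1 : ℕ) = k0
            · have hwm := honly w hw hwk
              subst hwm
              simp
            · by_cases hwin : a' ≤ (w.1 : ℕ) ∧ (w.1 : ℕ) < a' + n'
              · exact Finset.mem_union_left _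
                  (Finset.mem_union_left _ (Finset.mem_filter.2 ⟨hw, hwin⟩))
              · exact Finset.mem_union_left _
                  (Finset.mem_union_right _ (Finset.mem_filter.2 ⟨hw, hwk, hwin⟩))
          have c1 := Finset.card_le_card hsubU
          have c2 := Finset.card_union_le (S' ∪ So) ({m} : Finset (Fin N × Fin s))
          have c3 := Finset.card_union_le S' So
          have c4 : ({m} : Finset (Fin N × Fin s)).card = 1 := Finset.card_singleton m
          omega
        have hlog : Nat.log 2 n ≤ Nat.log 2 n' + 1 := by
          have h1 : Nat.log 2 (n / 2) = Nat.log 2 n - 1 := Nat.log_div_base 2 n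
          have h2 : Nat.log 2 (n / 2) ≤ Nat.log 2 n' := Nat.log_mono_right hhalf
          have h3 : 0 < Nat.log 2 n := Nat.log_pos one_lt_two hn2
          omega
        have hA : s * (Nat.log 2 n + 1) ≤ s * (Nat.log 2 n' + 1) + s :=
          calc s * (Nat.log 2 n + 1) ≤ s * (Nat.log 2 n' + 1 + 1) :=
                Nat.mul_le_mul_left s (by omega)
            _ = s * (Nat.log 2 n' + 1) + s := by ring
        have hP : n * s = n' * s + s + ro * s := by
          rw [← hsplit]; ring
        have hS'card : S'.card ≤ n' * s := card_interval_le S' a' n' hS'bounds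
        omega
      rcases le_or_gt r l with hcase | hcase
      · exact main a l (k0 + 1) r (by omega) (by omega) (by omega)
          (fun k h1 h2 => by omega) (fun j h1 h2 h3 h4 => by omega)
      · exact main (k0 + 1) r a l (by omega) (by omega) (by omega)
          (fun k h1 h2 => by omega) (fun j h1 h2 h3 h4 => by omega)

end Aux

/-- For integers `b > c ≥ 1` and `a = 2^c`, the lexicographic product of the path on
`2^(b-c)` vertices with the complete graph on `a/2 = 2^(c-1)` vertices has treedepth
at least `(a/2)(b-c) = 2^(c-1) * (b-c)`. -/
theorem stmt_10 (b c : ℕ) (hc : 1 ≤ c) (hbc : c < b) :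
    2 ^ (c - 1) * (b - c) ≤ treedepth (pathCliqueGraph b c) := by
  set N := 2 ^ (b - c) with hN
  set s := 2 ^ (c - 1) with hs
  have hG : pathCliqueGraph b c = pcg N s := rfl
  have hspos : 0 < s := pow_pos (by norm_num) _
  have hNpos : 0 < N := pow_pos (by norm_num) _
  have hbound : ∀ le : (Fin N × Fin s → Fin N × Fin s → Prop),
      IsElimForest (pcg N s) le → s * (b - c) ≤ forestHeight le := by
    intro le hle
    obtain ⟨v, hv, hkey⟩ := key le hle Finset.univ 0 N hNpos
      (fun v _ => ⟨Nat.zero_le _, by simpa using v.1.isLt⟩)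
      (fun k h1 h2 => ⟨(⟨k, by omega⟩, ⟨0, hspos⟩), Finset.mem_univ _, rfl⟩)
    have hcardU : (Finset.univ : Finset (Fin N × Fin s)).card = N * s := by
      simp
    have hlogN : Nat.log 2 N = b - c := Nat.log_pow one_lt_two (b - c)
    rw [hlogN, hcardU] at hkey
    have h1 : s * (b - c + 1) ≤ (Finset.univ.filter (fun u => le u v)).card := by omega
    have h2 : (Finset.univ.filter (fun u => le u v)).card ≤ {u | le u v}.ncard := by
      rw [Set.ncard_eq_toFinset_card']
      apply Finset.card_le_card
      intro u hu
      simp only [Set.mem_toFinset, Set.mem_setOf_eq]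
      exact (Finset.mem_filter.1 hu).2
    have h3 : {u | le u v}.ncard ≤ forestHeight le := by
      unfold forestHeight
      exact le_ciSup (f := fun w => ({u | le u w} : Set (Fin N × Fin s)).ncard)
        (Set.Finite.bddAbove (Set.finite_range _)) v
    calc s * (b - c) ≤ s * (b - c + 1) := Nat.mul_le_mul_left _ (by omega)
      _ ≤ _ := le_trans h1 (le_trans h2 h3)
  obtain ⟨le₀, hle₀⟩ : ∃ le₀, IsElimForest (pcg N s) le₀ := by
    refine ⟨fun u v => (Fintype.equivFin (Fin N × Fin s)) u ≤ (Fintype.equivFin _) v,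
      ⟨⟨?_, ?_, ?_, ?_⟩, ?_⟩⟩
    · intro v; exact le_refl _
    · intro u v h1 h2; exact (Fintype.equivFin _).injective (le_antisymm h1 h2)
    · intro u v w h1 h2; exact le_trans h1 h2
    · intro u w v _ _; exact le_total _ _
    · intro u v _; exact le_total _ _
  rw [hG]
  unfold treedepth
  have hmem : forestHeight le₀ ∈
      {x | ∃ le : Fin N × Fin s → Fin N × Fin s → Prop,
        IsElimForest (pcg N s) le ∧ forestHeight le = x} := ⟨le₀, hle₀, rfl⟩
  refine le_csInf ⟨_, hmem⟩ ?_
  rintro x ⟨le, hle, rfl⟩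
  exact hbound le hle
end
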